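/- arXiv:2002.00331 — 4 statements merged into one kernel-verified Lean document; each statement's English description precedes it below -/
import Mathlib

section
/- Let L, K be positive integers, α ≥ 0 and c > 0 real numbers, and Φ̂, Λ ∈ Matrix (Fin L) (Fin K) ℂ. Define g : Matrix (Fin L) (Fin K) ℂ → ℝ by g(W) = α·‖W‖_F + Re (Matrix.trace (Λᴴ * (W − Φ̂))) + (c/2)·‖W − Φ̂‖_F², and set Ξ = c • Φ̂ − Λ. If ‖Ξ‖_F ≤ α, then g(0) ≤ g(W) for every W ∈ Matrix (Fin L) (Fin K) ℂ. -/
open Matrix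
open scoped BigOperators

/-- The Frobenius norm of a complex matrix: `‖A‖_F = √(∑ i j, |A i j|²)`. -/
noncomputable def frobNorm {L K : ℕ} (A : Matrix (Fin L) (Fin K) ℂ) : ℝ :=
  Real.sqrt (∑ i, ∑ j, ‖A i j‖ ^ 2)

lemma frobNorm_nonneg {L K : ℕ} (A : Matrix (Fin L) (Fin K) ℂ) : 0 ≤ frobNorm A :=
  Real.sqrt_nonneg _

lemma frobNorm_sq {L K : ℕ} (A : Matrix (Fin L) (Fin K) ℂ) :
    frobNorm A ^ 2 = ∑ i, ∑ j, ‖A i j‖ ^ 2 := by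
  rw [frobNorm, Real.sq_sqrt]
  positivity

lemma trace_re {L K : ℕ} (A B : Matrix (Fin L) (Fin K) ℂ) :
    (Matrix.trace (Aᴴ * B)).re = ∑ i, ∑ j, ((starRingEnd ℂ) (A i j) * B i j).re := by
  rw [Matrix.trace, Finset.sum_comm]
  simp [Matrix.diag, Matrix.mul_apply, Matrix.conjTranspose_apply, Complex.re_sum]

lemma cs {L K : ℕ} (A B : Matrix (Fin L) (Fin K) ℂ) :
    ∑ i, ∑ j, ((starRingEnd ℂ) (A i j) * B i j).re ≤ frobNorm A * frobNorm B := by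
  have h1 : ∑ i, ∑ j, ((starRingEnd ℂ) (A i j) * B i j).re
      ≤ ∑ i, ∑ j, ‖A i j‖ * ‖B i j‖ := by
    refine Finset.sum_le_sum fun i _ => Finset.sum_le_sum fun j _ => ?_
    calc ((starRingEnd ℂ) (A i j) * B i j).re ≤ ‖(starRingEnd ℂ) (A i j) * B i j‖ :=
          Complex.re_le_norm _
      _ = ‖A i j‖ * ‖B i j‖ := by simp
  refine h1.trans ?_
  have h2 : (∑ p : Fin L × Fin K, ‖A p.1 p.2‖ * ‖B p.1 p.2‖) ^ 2
      ≤ (∑ p : Fin L × Fin K, ‖A p.1 p.2‖ ^ 2) *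
        ∑ p : Fin L × Fin K, ‖B p.1 p.2‖ ^ 2 :=
    Finset.sum_mul_sq_le_sq_mul_sq _ _ _
  rw [Fintype.sum_prod_type, Fintype.sum_prod_type, Fintype.sum_prod_type] at h2
  have hnn : (0:ℝ) ≤ ∑ i, ∑ j, ‖A i j‖ * ‖B i j‖ := by positivity
  have h3 := Real.sqrt_le_sqrt h2
  rw [Real.sqrt_sq hnn, Real.sqrt_mul (by positivity)] at h3
  exact h3

theorem stmt5 (L K : ℕ) (hL : 0 < L) (hK : 0 < K) (α c : ℝ) (hα : 0 ≤ α) (hc : 0 < c)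
    (Φ Λ : Matrix (Fin L) (Fin K) ℂ)
    (g : Matrix (Fin L) (Fin K) ℂ → ℝ)
    (hg : ∀ W, g W = α * frobNorm W + (Matrix.trace (Λᴴ * (W - Φ))).re +
      c / 2 * frobNorm (W - Φ) ^ 2)
    (Ξ : Matrix (Fin L) (Fin K) ℂ) (hΞ : Ξ = c • Φ - Λ)
    (h : frobNorm Ξ ≤ α) :
    ∀ W : Matrix (Fin L) (Fin K) ℂ, g 0 ≤ g W := by
  intro W
  rw [hg, hg]
  have h0 : frobNorm (0 : Matrix (Fin L) (Fin K) ℂ) = 0 := by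
    simp [frobNorm]
  have hexp : ∀ V : Matrix (Fin L) (Fin K) ℂ, frobNorm (V - Φ) ^ 2 = frobNorm V ^ 2
      - 2 * (∑ i, ∑ j, ((starRingEnd ℂ) (Φ i j) * V i j).re) + frobNorm Φ ^ 2 := by
    intro V
    rw [frobNorm_sq, frobNorm_sq, frobNorm_sq]
    have hpt : ∀ i j, ‖(V - Φ) i j‖ ^ 2 = ‖V i j‖ ^ 2
        - 2 * ((starRingEnd ℂ) (Φ i j) * V i j).re + ‖Φ i j‖ ^ 2 := by
      intro i j
      rw [Matrix.sub_apply, Complex.sq_norm, Complex.sq_norm, Complex.sq_norm,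
        Complex.normSq_sub]
      have : (V i j * (starRingEnd ℂ) (Φ i j)).re = ((starRingEnd ℂ) (Φ i j) * V i j).re := by
        rw [mul_comm]
      rw [this]; ring
    simp_rw [hpt, Finset.sum_add_distrib, Finset.sum_sub_distrib, Finset.mul_sum]
  have htr : ∀ V : Matrix (Fin L) (Fin K) ℂ, (Matrix.trace (Λᴴ * (V - Φ))).re
      = (∑ i, ∑ j, ((starRingEnd ℂ) (Λ i j) * V i j).re)
        - (∑ i, ∑ j, ((starRingEnd ℂ) (Λ i j) * Φ i j).re) := by
    intro V
    rw [Matrix.mul_sub, Matrix.trace_sub, Complex.sub_re, trace_re, trace_re]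
  have hXi : ∑ i, ∑ j, ((starRingEnd ℂ) (Ξ i j) * W i j).re
      = c * (∑ i, ∑ j, ((starRingEnd ℂ) (Φ i j) * W i j).re)
        - ∑ i, ∑ j, ((starRingEnd ℂ) (Λ i j) * W i j).re := by
    subst hΞ
    rw [Finset.mul_sum, ← Finset.sum_sub_distrib]
    refine Finset.sum_congr rfl fun i _ => ?_
    rw [Finset.mul_sum, ← Finset.sum_sub_distrib]
    refine Finset.sum_congr rfl fun j _ => ?_
    simp only [Matrix.sub_apply, Matrix.smul_apply, map_sub, sub_mul, Complex.sub_re]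
    congr 1
    rw [Complex.real_smul]
    simp [Complex.conj_ofReal, mul_assoc, Complex.re_ofReal_mul]
  have hcs : ∑ i, ∑ j, ((starRingEnd ℂ) (Ξ i j) * W i j).re ≤ α * frobNorm W :=
    (cs Ξ W).trans (mul_le_mul_of_nonneg_right h (frobNorm_nonneg W))
  rw [hexp W, hexp 0, htr W, htr 0, h0]
  have hz : ∀ i, ∑ j, ((starRingEnd ℂ) (Φ i j) * (0 : Matrix (Fin L) (Fin K) ℂ) i j).re = 0 := by
    intro i; simp
  have hz' : ∀ i, ∑ j, ((starRingEnd ℂ) (Λ i j) * (0 : Matrix (Fin L) (Fin K) ℂ) i j).re = 0 := by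
    intro i; simp
  simp only [Finset.sum_congr rfl fun i _ => hz i, Finset.sum_congr rfl fun i _ => hz' i,
    smul_zero, Finset.sum_const]
  have hW2 : 0 ≤ frobNorm W ^ 2 := sq_nonneg _
  nlinarith [hXi, hcs, hW2, frobNorm_nonneg W]
end

section
/- Let L, K be positive integers, α ≥ 0 and c > 0 real numbers, and Φ̂, Λ ∈ Matrix (Fin L) (Fin K) ℂ. Define g : Matrix (Fin L) (Fin K) ℂ → ℝ by g(W) = α·‖W‖_F + Re (Matrix.trace (Λᴴ * (W − Φ̂))) + (c/2)·‖W − Φ̂‖_F², and set Ξ = c • Φ̂ − Λ. If ‖Ξ‖_F > α, then W* = ((‖Ξ‖_F − α)/(c·‖Ξ‖_F)) • Ξ satisfies g(W*) ≤ g(W) for every W, with equality only when W = W*; i.e., W* is the unique global minimizer of g. -/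
open Matrix
open scoped BigOperators

open scoped RealInnerProductSpace in
lemma key_shrink {E : Type*} [NormedAddCommGroup E] [InnerProductSpace ℝ E]
    (α c : ℝ) (hα : 0 ≤ α) (hc : 0 < c) (φ l ξ : E) (hξ : ξ = c • φ - l)
    (h : α < ‖ξ‖) (wstar : E) (hw : wstar = ((‖ξ‖ - α) / (c * ‖ξ‖)) • ξ)
    (w : E) :
    α * ‖wstar‖ + ⟪l, wstar - φ⟫ + c / 2 * ‖wstar - φ‖ ^ 2 + c / 2 * ‖w - wstar‖ ^ 2
      ≤ α * ‖w‖ + ⟪l, w - φ⟫ + c / 2 * ‖w - φ‖ ^ 2 := by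
  have hn : 0 < ‖ξ‖ := lt_of_le_of_lt hα h
  set r : ℝ := (‖ξ‖ - α) / (c * ‖ξ‖) with hr
  have hr0 : 0 ≤ r := div_nonneg (by linarith) (by positivity)
  have hnw : ‖wstar‖ = (‖ξ‖ - α) / c := by
    rw [hw, norm_smul, Real.norm_eq_abs, abs_of_nonneg hr0, hr]
    field_simp
  -- c • wstar - ξ = (-(α/‖ξ‖)) • ξ
  have hcw : c • wstar - ξ = (-(α / ‖ξ‖)) • ξ := by
    rw [hw, smul_smul]
    rw [show c * r = 1 - α / ‖ξ‖ by rw [hr]; field_simp]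
    rw [sub_smul, one_smul]
    module
  have hiw : ⟪ξ, wstar⟫ = r * ‖ξ‖ ^ 2 := by
    rw [hw, real_inner_smul_right, real_inner_self_eq_norm_sq]
  -- decomposition of ‖w - φ‖²
  have hdec : ‖w - φ‖ ^ 2 = ‖w - wstar‖ ^ 2 + 2 * ⟪w - wstar, wstar - φ⟫ + ‖wstar - φ‖ ^ 2 := by
    have : w - φ = (w - wstar) + (wstar - φ) := by abel
    rw [this, norm_add_sq_real]
  have hCS : ⟪ξ, w⟫ ≤ ‖ξ‖ * ‖w‖ := real_inner_le_norm ξ w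
  -- linear term rearrangement
  have hlin : ⟪l, w - φ⟫ - ⟪l, wstar - φ⟫ = ⟪l, w - wstar⟫ := by
    rw [← inner_sub_right]; congr 1; abel
  have hl : l = c • φ - ξ := by rw [hξ]; abel
  have e1 : c • (wstar - φ) + l = c • wstar - ξ := by rw [hl]; module
  have hmid : c * ⟪w - wstar, wstar - φ⟫ + ⟪l, w - wstar⟫
      = -(α / ‖ξ‖) * (⟪ξ, w⟫ - ⟪ξ, wstar⟫) := by
    have step : ⟪c • wstar - ξ, w - wstar⟫
        = c * ⟪wstar - φ, w - wstar⟫ + ⟪l, w - wstar⟫ := by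
      rw [← e1, inner_add_left, real_inner_smul_left]
    have step2 : (⟪c • wstar - ξ, w - wstar⟫ : ℝ) = -(α / ‖ξ‖) * (⟪ξ, w⟫ - ⟪ξ, wstar⟫) := by
      rw [hcw, real_inner_smul_left, inner_sub_right]
    have comm : (⟪w - wstar, wstar - φ⟫ : ℝ) = ⟪wstar - φ, w - wstar⟫ := real_inner_comm _ _
    linear_combination step2 - step + c * comm
  -- now combine
  have hrn : r * ‖ξ‖ = (‖ξ‖ - α) / c := by rw [hr]; field_simp
  have key0 : 0 ≤ α * ‖w‖ - (α / ‖ξ‖) * ⟪ξ, w⟫ := by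
    have h2 : (α / ‖ξ‖) * ⟪ξ, w⟫ ≤ (α / ‖ξ‖) * (‖ξ‖ * ‖w‖) := by
      apply mul_le_mul_of_nonneg_left hCS (by positivity)
    have h3 : (α / ‖ξ‖) * (‖ξ‖ * ‖w‖) = α * ‖w‖ := by field_simp
    linarith
  have hexp : -(α / ‖ξ‖) * (⟪ξ, w⟫ - ⟪ξ, wstar⟫)
      = -(α / ‖ξ‖) * ⟪ξ, w⟫ + α * ((‖ξ‖ - α) / c) := by
    rw [hiw]
    have : (α / ‖ξ‖) * (r * ‖ξ‖ ^ 2) = α * ((‖ξ‖ - α) / c) := by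
      have : r * ‖ξ‖ ^ 2 = ((‖ξ‖ - α) / c) * ‖ξ‖ := by rw [pow_two, ← mul_assoc, hrn]
      rw [this]; field_simp
    linarith [this]
  nlinarith [hdec, hmid, hlin, key0, hexp, hnw]

theorem stmt6 (L K : ℕ) (hL : 0 < L) (hK : 0 < K) (α c : ℝ) (hα : 0 ≤ α) (hc : 0 < c)
    (Φ Λ : Matrix (Fin L) (Fin K) ℂ)
    (g : Matrix (Fin L) (Fin K) ℂ → ℝ)
    (hg : ∀ W, g W = α * frobNorm W + (Matrix.trace (Λᴴ * (W - Φ))).re +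
      c / 2 * frobNorm (W - Φ) ^ 2)
    (Ξ : Matrix (Fin L) (Fin K) ℂ) (hΞ : Ξ = c • Φ - Λ)
    (h : frobNorm Ξ > α)
    (Wstar : Matrix (Fin L) (Fin K) ℂ)
    (hWstar : Wstar = (((frobNorm Ξ - α) / (c * frobNorm Ξ) : ℝ)) • Ξ) :
    (∀ W : Matrix (Fin L) (Fin K) ℂ, g Wstar ≤ g W) ∧
      (∀ W : Matrix (Fin L) (Fin K) ℂ, g W = g Wstar → W = Wstar) := by
  classical
  -- transfer to EuclideanSpace
  let T : Matrix (Fin L) (Fin K) ℂ → EuclideanSpace ℂ (Fin L × Fin K) :=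
    fun A => WithLp.toLp 2 (fun p => A p.1 p.2)
  have hTapp : ∀ A p, T A p = A p.1 p.2 := fun _ _ => rfl
  have hTinj : Function.Injective T := by
    intro A B hAB
    ext i j
    exact congrArg (fun v => v (i, j)) hAB
  have hTsub : ∀ A B, T (A - B) = T A - T B := fun _ _ => rfl
  have hTsmul : ∀ (r : ℝ) A, T (r • A) = r • T A := fun _ _ => rfl
  have hnorm : ∀ A, frobNorm A = ‖T A‖ := by
    intro A
    rw [EuclideanSpace.norm_eq, frobNorm, Fintype.sum_prod_type]
  have hinnerR : ∀ A B, (Matrix.trace (Aᴴ * B)).re = (inner ℝ (T A) (T B) : ℝ) := by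
    intro A B
    rw [PiLp.inner_apply]
    simp only [Complex.inner, Matrix.trace, Matrix.diag_apply, Matrix.mul_apply,
      Matrix.conjTranspose_apply, Complex.re_sum, Fintype.sum_prod_type]
    rw [Finset.sum_comm]
    exact Finset.sum_congr rfl fun i _ => Finset.sum_congr rfl fun j _ => congrArg Complex.re (mul_comm _ _)
  have hΞT : T Ξ = c • T Φ - T Λ := by
    rw [hΞ]
    ext p
    simp [hTapp, Matrix.sub_apply, Matrix.smul_apply, Complex.real_smul]
  have hnΞ : ‖T Ξ‖ = frobNorm Ξ := (hnorm Ξ).symm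
  have hWT : T Wstar = ((‖T Ξ‖ - α) / (c * ‖T Ξ‖)) • T Ξ := by
    rw [hWstar, hTsmul, hnΞ]
  have hgT : ∀ W, g W = α * ‖T W‖ + (inner ℝ (T Λ) (T W - T Φ) : ℝ)
      + c / 2 * ‖T W - T Φ‖ ^ 2 := by
    intro W
    rw [hg, hnorm, hinnerR, hTsub, hnorm, hTsub]
  have hmain : ∀ W, g Wstar + c / 2 * ‖T W - T Wstar‖ ^ 2 ≤ g W := by
    intro W
    rw [hgT, hgT]
    have := key_shrink α c hα hc (T Φ) (T Λ) (T Ξ) hΞT (by rw [hnΞ]; exact h)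
      (T Wstar) hWT (T W)
    linarith
  constructor
  · intro W
    have := hmain W
    nlinarith [sq_nonneg ‖T W - T Wstar‖, hc]
  · intro W hW
    have h1 := hmain W
    have h2 : ‖T W - T Wstar‖ ^ 2 ≤ 0 := by nlinarith
    have h3 : T W - T Wstar = 0 := by
      have := norm_nonneg (T W - T Wstar)
      have : ‖T W - T Wstar‖ = 0 := by nlinarith
      exact norm_eq_zero.mp this
    exact hTinj (sub_eq_zero.mp h3)
end

section
/- Let K be a positive integer, γ > 0 and c > 0 real numbers, b₀, ψ₀ ∈ ℝ, and b', ψ' ∈ EuclideanSpace ℂ (Fin K). Define F : ℝ × EuclideanSpace ℂ (Fin K) → ℝ by F(t, v) = ψ₀·(t − b₀) + Re ⟪ψ', v − b'⟫ + (c/2)·((t − b₀)² + ‖v − b'‖²), and the second-order cone C = {(t, v) : ‖v‖ ≤ t / Real.sqrt γ}. If ‖c • b' − ψ'‖ ≤ (c·b₀ − ψ₀) / Real.sqrt γ, then the point (t*, v*) = ((c·b₀ − ψ₀)/c, c⁻¹ • (c • b' − ψ')) lies in C and satisfies F(t*, v*) ≤ F(t, v) for every (t, v) ∈ C. -/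
theorem stmt8 (K : ℕ) (hK : 0 < K) (γ c : ℝ) (hγ : 0 < γ) (hc : 0 < c)
    (b0 ψ0 : ℝ) (b' ψ' : EuclideanSpace ℂ (Fin K))
    (F : ℝ × EuclideanSpace ℂ (Fin K) → ℝ)
    (hF : ∀ (t : ℝ) (v : EuclideanSpace ℂ (Fin K)),
      F (t, v) = ψ0 * (t - b0) + (inner ℂ ψ' (v - b') : ℂ).re +
        c / 2 * ((t - b0) ^ 2 + ‖v - b'‖ ^ 2))
    (C : Set (ℝ × EuclideanSpace ℂ (Fin K)))
    (hC : C = {q : ℝ × EuclideanSpace ℂ (Fin K) | ‖q.2‖ ≤ q.1 / Real.sqrt γ})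
    (h : ‖c • b' - ψ'‖ ≤ (c * b0 - ψ0) / Real.sqrt γ) :
    ((c * b0 - ψ0) / c, c⁻¹ • (c • b' - ψ')) ∈ C ∧
      ∀ q ∈ C, F ((c * b0 - ψ0) / c, c⁻¹ • (c • b' - ψ')) ≤ F q := by
  have hsg : 0 < Real.sqrt γ := Real.sqrt_pos.mpr hγ
  constructor
  · rw [hC]
    simp only [Set.mem_setOf_eq, norm_smul, Real.norm_eq_abs,
      abs_of_pos (inv_pos.mpr hc)]
    have h2 : ‖c • b' - ψ'‖ * c⁻¹ ≤ (c * b0 - ψ0) / Real.sqrt γ * c⁻¹ := by gcongr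
    calc c⁻¹ * ‖c • b' - ψ'‖ = ‖c • b' - ψ'‖ * c⁻¹ := mul_comm _ _
      _ ≤ (c * b0 - ψ0) / Real.sqrt γ * c⁻¹ := h2
      _ = (c * b0 - ψ0) / c / Real.sqrt γ := by ring
  · intro q hq
    obtain ⟨t, v⟩ := q
    have hv' : c⁻¹ • (c • b' - ψ') - b' = (-c⁻¹ : ℝ) • ψ' := by
      rw [smul_sub, smul_smul, inv_mul_cancel₀ hc.ne', one_smul]
      module
    have ht' : (c * b0 - ψ0) / c - b0 = -ψ0 / c := by
      field_simp
      ring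
    rw [hF, hF, hv', ht']
    have hre : (inner ℂ ψ' ((-c⁻¹ : ℝ) • ψ') : ℂ).re = -c⁻¹ * ‖ψ'‖ ^ 2 := by
      rw [show (-c⁻¹ : ℝ) • ψ' = ((-c⁻¹ : ℝ) : ℂ) • ψ' from
          (Complex.coe_smul _ ψ').symm,
        inner_smul_right, Complex.re_ofReal_mul, ← RCLike.re_to_complex,
        inner_self_eq_norm_sq ψ']
    rw [hre]
    have hnrm : ‖(-c⁻¹ : ℝ) • ψ'‖ ^ 2 = c⁻¹ ^ 2 * ‖ψ'‖ ^ 2 := by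
      rw [norm_smul, Real.norm_eq_abs, mul_pow]
      simp [abs_of_pos (inv_pos.mpr hc)]
    rw [hnrm]
    set p : ℝ := (inner ℂ ψ' (v - b') : ℂ).re with hp
    set n : ℝ := ‖v - b'‖ with hn
    set s : ℝ := t - b0 with hs
    set Ψ : ℝ := ‖ψ'‖ with hΨ
    have hcs : -(Ψ * n) ≤ p := by
      have h1 : |p| ≤ ‖(inner ℂ ψ' (v - b') : ℂ)‖ := Complex.abs_re_le_norm _
      have h2 : ‖(inner ℂ ψ' (v - b') : ℂ)‖ ≤ Ψ * n := norm_inner_le_norm _ _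
      have := (abs_le.mp (h1.trans h2)).1
      linarith
    have hn0 : 0 ≤ n := norm_nonneg _
    have lhs_eq : ψ0 * (-ψ0 / c) + -c⁻¹ * Ψ ^ 2 +
        c / 2 * ((-ψ0 / c) ^ 2 + c⁻¹ ^ 2 * Ψ ^ 2)
        = (-ψ0 ^ 2 - Ψ ^ 2) / (2 * c) := by
      field_simp
      ring
    rw [lhs_eq]
    clear_value p n s Ψ
    have h2c : (0:ℝ) < 2 * c := by linarith
    rw [div_le_iff₀ h2c]
    nlinarith [sq_nonneg (c * s + ψ0), sq_nonneg (c * n - Ψ),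
      mul_le_mul_of_nonneg_left hcs hc.le]
end

section
/- Let K be a positive integer, γ > 0 and c > 0 real numbers, b₀, ψ₀ ∈ ℝ, and b', ψ' ∈ EuclideanSpace ℂ (Fin K). Define F : ℝ × EuclideanSpace ℂ (Fin K) → ℝ by F(t, v) = ψ₀·(t − b₀) + Re ⟪ψ', v − b'⟫ + (c/2)·((t − b₀)² + ‖v − b'‖²), and the second-order cone C = {(t, v) : ‖v‖ ≤ t / Real.sqrt γ}. Set A = c·b₀ − ψ₀ and B = ‖c • b' − ψ'‖, and assume B > A / Real.sqrt γ and B + Real.sqrt γ · A > 0. Define ε = (γ·B − Real.sqrt γ · A)/(1 + γ). Then ε > 0, B − ε > 0, and the point (t*, v*) with t* = (A + ε / Real.sqrt γ)/c and v* = ((B − ε)/(c·B)) • (c • b' − ψ') lies on the boundary of the cone (‖v*‖ = t* / Real.sqrt γ) and satisfies F(t*, v*) ≤ F(t, v) for every (t, v) ∈ C. -/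
set_option maxHeartbeats 1000000

private lemma aux_smul_left_re {K : ℕ} (r : ℝ) (x y : EuclideanSpace ℂ (Fin K)) :
    (inner ℂ (r • x) y : ℂ).re = r * (inner ℂ x y : ℂ).re := by
  have h : (r • x) = (r:ℂ) • x := rfl
  rw [h, inner_smul_left]
  simp [Complex.mul_re]

private lemma aux_smul_right_re {K : ℕ} (r : ℝ) (x y : EuclideanSpace ℂ (Fin K)) :
    (inner ℂ x (r • y) : ℂ).re = r * (inner ℂ x y : ℂ).re := by
  have h : (r • y) = (r:ℂ) • y := rfl
  rw [h, inner_smul_right]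
  simp [Complex.mul_re]

private lemma aux_re_le {K : ℕ} (x y : EuclideanSpace ℂ (Fin K)) :
    (inner ℂ x y : ℂ).re ≤ ‖x‖ * ‖y‖ :=
  re_inner_le_norm (𝕜 := ℂ) x y

theorem stmt9 (K : ℕ) (hK : 0 < K) (γ c : ℝ) (hγ : 0 < γ) (hc : 0 < c)
    (b0 ψ0 : ℝ) (b' ψ' : EuclideanSpace ℂ (Fin K))
    (F : ℝ × EuclideanSpace ℂ (Fin K) → ℝ)
    (hF : ∀ (t : ℝ) (v : EuclideanSpace ℂ (Fin K)),
      F (t, v) = ψ0 * (t - b0) + (inner ℂ ψ' (v - b') : ℂ).re +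
        c / 2 * ((t - b0) ^ 2 + ‖v - b'‖ ^ 2))
    (C : Set (ℝ × EuclideanSpace ℂ (Fin K)))
    (hC : C = {q : ℝ × EuclideanSpace ℂ (Fin K) | ‖q.2‖ ≤ q.1 / Real.sqrt γ})
    (A B : ℝ) (hA : A = c * b0 - ψ0) (hB : B = ‖c • b' - ψ'‖)
    (h1 : B > A / Real.sqrt γ) (h2 : B + Real.sqrt γ * A > 0)
    (ε : ℝ) (hε : ε = (γ * B - Real.sqrt γ * A) / (1 + γ))
    (tstar : ℝ) (htstar : tstar = (A + ε / Real.sqrt γ) / c)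
    (vstar : EuclideanSpace ℂ (Fin K))
    (hvstar : vstar = ((B - ε) / (c * B)) • (c • b' - ψ')) :
    0 < ε ∧ 0 < B - ε ∧ ‖vstar‖ = tstar / Real.sqrt γ ∧
      ∀ q ∈ C, F (tstar, vstar) ≤ F q := by
  have hγ' : 0 < Real.sqrt γ := Real.sqrt_pos.mpr hγ
  have hsq : Real.sqrt γ * Real.sqrt γ = γ := Real.mul_self_sqrt hγ.le
  have h1' : A < B * Real.sqrt γ := (div_lt_iff₀ hγ').mp h1
  have hBpos : 0 < B := by nlinarith
  have hεpos : 0 < ε := by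
    rw [hε]
    apply div_pos
    · nlinarith
    · linarith
  have h3 : ε * (1 + γ) = γ * B - Real.sqrt γ * A := by
    rw [hε]; field_simp
  have hBε : 0 < B - ε := by nlinarith
  have hbd : γ * (B - ε) = Real.sqrt γ * A + ε := by nlinarith [h3]
  have hB0 : B ≠ 0 := hBpos.ne'
  have hc0 : c ≠ 0 := hc.ne'
  have hγ0 : Real.sqrt γ ≠ 0 := hγ'.ne'
  set w : EuclideanSpace ℂ (Fin K) := c • b' - ψ' with hw
  have hnw : ‖w‖ = B := hB.symm
  have hvn : ‖vstar‖ = (B - ε) / c := by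
    rw [hvstar, norm_smul, hnw, Real.norm_eq_abs,
      abs_of_pos (div_pos hBε (mul_pos hc hBpos))]
    field_simp
  have hts : tstar / Real.sqrt γ = (B - ε) / c := by
    rw [htstar]
    rw [div_div, div_eq_div_iff (by positivity) hc0]
    field_simp
    linear_combination -hbd - (B-ε)*hsq
  refine ⟨hεpos, hBε, by rw [hvn, hts], ?_⟩
  rintro ⟨t, v⟩ hq
  rw [hC] at hq
  simp only [Set.mem_setOf_eq] at hq
  rw [hF, hF]
  have hA1 : c * (tstar - b0) + ψ0 = ε / Real.sqrt γ := by
    rw [htstar, hA]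
    field_simp
    ring
  have hcs : ψ' + c • (vstar - b') = (-(ε/B)) • w := by
    rw [hvstar, smul_sub, smul_smul]
    have h5 : c * ((B - ε)/(c*B)) = 1 - ε/B := by field_simp
    rw [h5, hw]
    module
  have h6 : v - b' = (v - vstar) + (vstar - b') := by abel
  have hvexp : ‖v - b'‖^2 = ‖v - vstar‖^2 + 2*(inner ℂ (v - vstar) (vstar - b') : ℂ).re
      + ‖vstar - b'‖^2 := by
    rw [h6]; exact norm_add_sq (𝕜 := ℂ) _ _
  have hiexp : (inner ℂ ψ' (v - b') : ℂ).re
      = (inner ℂ ψ' (v - vstar) : ℂ).re + (inner ℂ ψ' (vstar - b') : ℂ).re := by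
    rw [h6, inner_add_right, Complex.add_re]
  have hswap : (inner ℂ (v - vstar) (vstar - b') : ℂ).re
      = (inner ℂ (vstar - b') (v - vstar) : ℂ).re := by
    exact inner_re_symm (𝕜 := ℂ) _ _
  have hcombine : (inner ℂ ψ' (v - vstar) : ℂ).re
      + c * (inner ℂ (vstar - b') (v - vstar) : ℂ).re
      = -(ε/B) * (inner ℂ w (v - vstar) : ℂ).re := by
    rw [← aux_smul_left_re c, ← Complex.add_re, ← inner_add_left, hcs, aux_smul_left_re]
  have hwvs : (inner ℂ w vstar : ℂ).re = (B - ε)/(c*B) * B^2 := by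
    rw [hvstar, aux_smul_right_re,
      show (inner ℂ w w : ℂ).re = ‖w‖^2 from inner_self_eq_norm_sq (𝕜 := ℂ) w, hnw]
  have hwsub : (inner ℂ w (v - vstar) : ℂ).re
      = (inner ℂ w v : ℂ).re - (B-ε)/(c*B)*B^2 := by
    rw [inner_sub_right, Complex.sub_re, hwvs]
  have heq2 : ε/B*((B-ε)/(c*B)*B^2) = ε*(B-ε)/c := by field_simp
  have htt : ε/Real.sqrt γ * tstar = ε*(B-ε)/c := by
    have h7 : ε/Real.sqrt γ * tstar = ε * (tstar/Real.sqrt γ) := by ring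
    rw [h7, hts]; ring
  have hmain : ψ0*(t-b0) + (inner ℂ ψ' (v-b') : ℂ).re + c/2*((t-b0)^2+‖v-b'‖^2)
      - (ψ0*(tstar-b0) + (inner ℂ ψ' (vstar-b') : ℂ).re + c/2*((tstar-b0)^2+‖vstar-b'‖^2))
      = c/2*(t-tstar)^2 + c/2*‖v-vstar‖^2
        + ε/Real.sqrt γ * t - ε/B*(inner ℂ w v : ℂ).re := by
    linear_combination (c/2)*hvexp + hiexp + c*hswap + hcombine
      + (-(ε/B))*hwsub + (t - tstar)*hA1 - htt + heq2
  have hbound1 : (inner ℂ w v : ℂ).re ≤ B * ‖v‖ := by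
    rw [← hnw]; exact aux_re_le w v
  have hb2 : ε/B*(inner ℂ w v : ℂ).re ≤ ε*‖v‖ := by
    have h7 : ε/B*(inner ℂ w v : ℂ).re ≤ ε/B*(B*‖v‖) :=
      mul_le_mul_of_nonneg_left hbound1 (by positivity)
    have h8 : ε/B*(B*‖v‖) = ε*‖v‖ := by field_simp
    linarith
  have hb3 : ε*‖v‖ ≤ ε/Real.sqrt γ * t := by
    have h7 : ε*‖v‖ ≤ ε*(t/Real.sqrt γ) := mul_le_mul_of_nonneg_left hq hεpos.le
    have h8 : ε*(t/Real.sqrt γ) = ε/Real.sqrt γ * t := by ring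
    linarith
  have hs1 : 0 ≤ c/2*(t-tstar)^2 := by positivity
  have hs2 : 0 ≤ c/2*‖v-vstar‖^2 := by positivity
  linarith [hmain, hb2, hb3, hs1, hs2]
end
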